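/- arXiv:0811.3784 — 2 statements merged into one kernel-verified Lean document; each statement's English description precedes it below -/
import Mathlib

section
/- Let z_1, …, z_d ∈ ℂ be distinct, L_0 ∈ Mat_N(ℂ), and p_i, q_i ∈ ℂ^N. Set B_i(w) = I_N + p_i q_iᵀ/(w − z_i), L(w) = L_0 B_1(w) B_2(w) ⋯ B_d(w), and for each i the prefix T_i^<(w) = L_0 B_1(w) ⋯ B_{i−1}(w) and suffix T_i^>(w) = B_{i+1}(w) ⋯ B_d(w) (empty products equal I_N resp. are omitted). Then for all u, v ∈ ℂ \ {z_1,…,z_d} with u ≠ v: Σ_{i=1}^d (T_i^<(u) ⊗ T_i^<(v)) · [ ((p_i ⊗ I_N)(I_N ⊗ q_iᵀ) − (I_N ⊗ p_i)(q_iᵀ ⊗ I_N)) / ((u − z_i)(v − z_i)) ] · (T_i^>(u) ⊗ T_i^>(v)) = (1/(u − v)) · [ 𝒫 , L(u) ⊗ L(v) ], where [X,Y] = XY − YX. (This is the quadratic r-matrix relation {L(u) ⊗, L(v)} = [r(u−v), L(u) ⊗ L(v)], r(z) = 𝒫/z, for the multiplicative representation with canonical brackets {q_i^l, p_j^s} =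 δ_{ij} δ_{ls}.) -/
open Matrix BigOperators
open scoped Kronecker

noncomputable section

/-- The permutation matrix `𝒫 = Σ_{i,j} e_{ij} ⊗ e_{ji}` in `Mat_{N²}(ℂ)`. -/
def permMat (N : ℕ) : Matrix (Fin N × Fin N) (Fin N × Fin N) ℂ :=
  ∑ i : Fin N, ∑ j : Fin N,
    (Matrix.single i j (1 : ℂ)) ⊗ₖ (Matrix.single j i (1 : ℂ))

/-- The Kronecker product `a ⊗ M` of a column vector `a ∈ ℂ^N` with an `N×N` matrix. -/
def colKron {N : ℕ} (a : Fin N → ℂ) (M : Matrix (Fin N) (Fin N) ℂ) :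
    Matrix (Fin N × Fin N) (Fin N) ℂ :=
  fun ip j => a ip.1 * M ip.2 j

/-- The Kronecker product `M ⊗ a` of an `N×N` matrix with a column vector. -/
def kronCol {N : ℕ} (M : Matrix (Fin N) (Fin N) ℂ) (a : Fin N → ℂ) :
    Matrix (Fin N × Fin N) (Fin N) ℂ :=
  fun ip j => M ip.1 j * a ip.2

/-- The Kronecker product `bᵀ ⊗ M` of a row vector with an `N×N` matrix. -/
def rowKron {N : ℕ} (b : Fin N → ℂ) (M : Matrix (Fin N) (Fin N) ℂ) :
    Matrix (Fin N) (Fin N × Fin N) ℂ :=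
  fun i jq => b jq.1 * M i jq.2

/-- The Kronecker product `M ⊗ bᵀ` of an `N×N` matrix with a row vector. -/
def kronRow {N : ℕ} (M : Matrix (Fin N) (Fin N) ℂ) (b : Fin N → ℂ) :
    Matrix (Fin N) (Fin N × Fin N) ℂ :=
  fun i jq => M i jq.1 * b jq.2

/-- The ordered product `B_{i₁}(w) B_{i₂}(w) ⋯` over the indices `j` of `Fin d`
(in increasing order) satisfying a predicate `c`. -/
def orderedProd {N d : ℕ} (B : Fin d → ℂ → Matrix (Fin N) (Fin N) ℂ)
    (c : Fin d → Prop) [DecidablePred c] (w : ℂ) : Matrix (Fin N) (Fin N) ℂ :=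
  (List.ofFn fun j : Fin d => if c j then B j w else 1).prod

lemma permMat_apply {N : ℕ} (a b c e : Fin N) :
    permMat N (a, b) (c, e) = if a = e ∧ b = c then 1 else 0 := by
  simp [permMat, Matrix.single, Matrix.sum_apply, ite_and, eq_comm]

lemma permMat_mul_apply {N : ℕ} {m : Type*} [Fintype m] (M : Matrix (Fin N × Fin N) m ℂ)
    (a b : Fin N) (y : m) : (permMat N * M) (a, b) y = M (b, a) y := by
  rw [Matrix.mul_apply, Fintype.sum_prod_type]
  simp [permMat_apply, ite_and]

lemma mul_permMat_apply {N : ℕ} {m : Type*} [Fintype m] (M : Matrix m (Fin N × Fin N) ℂ)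
    (x : m) (c e : Fin N) : (M * permMat N) x (c, e) = M x (e, c) := by
  rw [Matrix.mul_apply, Fintype.sum_prod_type]
  simp [permMat_apply, ite_and]

lemma permMat_mul_kron {N : ℕ} (X Y : Matrix (Fin N) (Fin N) ℂ) :
    permMat N * (X ⊗ₖ Y) = (Y ⊗ₖ X) * permMat N := by
  ext ⟨a, b⟩ ⟨c, e⟩
  rw [permMat_mul_apply, mul_permMat_apply]
  simp [Matrix.kroneckerMap_apply, mul_comm]

lemma site_identity {N : ℕ} (zi u v : ℂ) (hu : u ≠ zi) (hv : v ≠ zi) (huv : u ≠ v)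
    (p q : Fin N → ℂ) :
    (((u - zi) * (v - zi))⁻¹ •
        (colKron p 1 * kronRow 1 q - kronCol 1 p * rowKron q 1)) =
      (u - v)⁻¹ •
        (permMat N * ((1 + (u - zi)⁻¹ • Matrix.vecMulVec p q) ⊗ₖ
            (1 + (v - zi)⁻¹ • Matrix.vecMulVec p q)) -
          ((1 + (u - zi)⁻¹ • Matrix.vecMulVec p q) ⊗ₖ
            (1 + (v - zi)⁻¹ • Matrix.vecMulVec p q)) * permMat N) := by
  have h1 : u - zi ≠ 0 := sub_ne_zero.mpr hu
  have h2 : v - zi ≠ 0 := sub_ne_zero.mpr hv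
  have h3 : u - v ≠ 0 := sub_ne_zero.mpr huv
  ext ⟨a, b⟩ ⟨c, e⟩
  simp only [Matrix.smul_apply, Matrix.sub_apply, permMat_mul_apply, mul_permMat_apply]
  simp only [Matrix.kroneckerMap_apply, Matrix.add_apply, Matrix.one_apply,
    Matrix.vecMulVec_apply, Matrix.smul_apply, smul_eq_mul]
  simp only [Matrix.mul_apply, colKron, kronRow, kronCol, rowKron, Matrix.one_apply,
    mul_ite, ite_mul, one_mul, mul_one, zero_mul, mul_zero,
    Finset.sum_ite_eq, Finset.sum_ite_eq', Finset.mem_univ, if_true]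
  split_ifs <;> field_simp <;> ring

lemma ofFn_if_lt_prod {M : Type*} [Monoid M] : ∀ {d : ℕ} (f : Fin d → M) (k : ℕ),
    (List.ofFn fun j : Fin d => if (j : ℕ) < k then f j else 1).prod
      = ((List.ofFn f).take k).prod
  | 0, f, k => by simp
  | d+1, f, 0 => by simp
  | d+1, f, k+1 => by
    rw [List.ofFn_succ, List.ofFn_succ (f := f)]
    simp only [Fin.val_zero, Nat.zero_lt_succ, if_pos, Fin.val_succ,
      Nat.succ_lt_succ_iff, List.take_cons, List.prod_cons]
    rw [ofFn_if_lt_prod (fun j => f j.succ) k]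
    simp

lemma ofFn_if_gt_prod {M : Type*} [Monoid M] : ∀ {d : ℕ} (f : Fin d → M) (k : ℕ),
    (List.ofFn fun j : Fin d => if k < (j : ℕ) then f j else 1).prod
      = ((List.ofFn f).drop (k+1)).prod
  | 0, f, k => by simp
  | d+1, f, 0 => by
    rw [List.ofFn_succ, List.ofFn_succ (f := f)]
    simp [Nat.succ_pos]
  | d+1, f, k+1 => by
    rw [List.ofFn_succ, List.ofFn_succ (f := f)]
    simp only [Fin.val_zero, Nat.not_lt_zero, if_neg, Fin.val_succ,
      Nat.succ_lt_succ_iff, List.drop_succ_cons, List.prod_cons, one_mul]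
    rw [ofFn_if_gt_prod (fun j => f j.succ) k]
    simp

lemma take_succ_prod {M : Type*} [Monoid M] {d : ℕ} (f : Fin d → M) (i : Fin d) :
    ((List.ofFn f).take ((i : ℕ)+1)).prod = ((List.ofFn f).take (i : ℕ)).prod * f i := by
  rw [List.take_succ]
  simp [List.getElem?_ofFn, i.isLt]

lemma drop_prod_eq {M : Type*} [Monoid M] {d : ℕ} (f : Fin d → M) (i : Fin d) :
    ((List.ofFn f).drop (i : ℕ)).prod = f i * ((List.ofFn f).drop ((i : ℕ)+1)).prod := by
  rw [List.drop_eq_getElem_cons (by simp [i.isLt])]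
  simp

/-- quadratic r-matrix relation for the rational multiplicative
representation `L(w) = L_0 B_1(w) ⋯ B_d(w)`, `B_i(w) = I + p_i q_iᵀ/(w − z_i)`:
`Σ_i (T_i^<(u) ⊗ T_i^<(v)) · [((p_i ⊗ I)(I ⊗ q_iᵀ) − (I ⊗ p_i)(q_iᵀ ⊗ I))/((u−z_i)(v−z_i))]
  · (T_i^>(u) ⊗ T_i^>(v)) = (1/(u−v))·[𝒫, L(u) ⊗ L(v)]`. -/
theorem statement3 (N d : ℕ) (z : Fin d → ℂ) (hz : Function.Injective z)
    (L₀ : Matrix (Fin N) (Fin N) ℂ) (p q : Fin d → Fin N → ℂ)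
    (B : Fin d → ℂ → Matrix (Fin N) (Fin N) ℂ)
    (hB : ∀ i w, B i w = 1 + (w - z i)⁻¹ • Matrix.vecMulVec (p i) (q i))
    (L : ℂ → Matrix (Fin N) (Fin N) ℂ)
    (hL : ∀ w, L w = L₀ * (List.ofFn fun j : Fin d => B j w).prod)
    (Tlt Tgt : Fin d → ℂ → Matrix (Fin N) (Fin N) ℂ)
    (hTlt : ∀ i w, Tlt i w = L₀ * orderedProd B (fun j => (j : ℕ) < (i : ℕ)) w)
    (hTgt : ∀ i w, Tgt i w = orderedProd B (fun j => (i : ℕ) < (j : ℕ)) w)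
    (u v : ℂ) (hu : ∀ i, u ≠ z i) (hv : ∀ i, v ≠ z i) (huv : u ≠ v) :
    ∑ i : Fin d,
      ((Tlt i u) ⊗ₖ (Tlt i v)) *
        (((u - z i) * (v - z i))⁻¹ •
          (colKron (p i) 1 * kronRow 1 (q i) - kronCol 1 (p i) * rowKron (q i) 1)) *
        ((Tgt i u) ⊗ₖ (Tgt i v)) =
    (u - v)⁻¹ •
      (permMat N * ((L u) ⊗ₖ (L v)) - ((L u) ⊗ₖ (L v)) * permMat N) := by
  classical
  set fu : Fin d → Matrix (Fin N) (Fin N) ℂ := fun j => B j u with hfu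
  set fv : Fin d → Matrix (Fin N) (Fin N) ℂ := fun j => B j v with hfv
  set g : ℕ → Matrix (Fin N × Fin N) (Fin N × Fin N) ℂ := fun k =>
    ((L₀ * ((List.ofFn fu).take k).prod) ⊗ₖ (L₀ * ((List.ofFn fv).take k).prod)) *
      permMat N *
      ((((List.ofFn fu).drop k).prod) ⊗ₖ (((List.ofFn fv).drop k).prod)) with hg
  have hstep : ∀ i : Fin d,
      ((Tlt i u) ⊗ₖ (Tlt i v)) *
        (((u - z i) * (v - z i))⁻¹ •
          (colKron (p i) 1 * kronRow 1 (q i) - kronCol 1 (p i) * rowKron (q i) 1)) *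
        ((Tgt i u) ⊗ₖ (Tgt i v))
      = (u - v)⁻¹ • (g (i : ℕ) - g ((i : ℕ) + 1)) := by
    intro i
    have hmid := site_identity (z i) u v (hu i) (hv i) huv (p i) (q i)
    rw [← hB i u, ← hB i v] at hmid
    rw [hmid, hTlt i u, hTlt i v, hTgt i u, hTgt i v]
    simp only [orderedProd]
    rw [ofFn_if_lt_prod (fun j => B j u), ofFn_if_lt_prod (fun j => B j v),
        ofFn_if_gt_prod (fun j => B j u), ofFn_if_gt_prod (fun j => B j v)]
    rw [mul_smul_comm, smul_mul_assoc]
    congr 1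
    have e1 : (B i u ⊗ₖ B i v) *
        ((((List.ofFn fu).drop ((i:ℕ)+1)).prod) ⊗ₖ (((List.ofFn fv).drop ((i:ℕ)+1)).prod))
        = (((List.ofFn fu).drop (i:ℕ)).prod) ⊗ₖ (((List.ofFn fv).drop (i:ℕ)).prod) := by
      rw [← Matrix.mul_kronecker_mul, ← drop_prod_eq fu i, ← drop_prod_eq fv i]
    have e2 : ((L₀ * ((List.ofFn fu).take (i:ℕ)).prod) ⊗ₖ
          (L₀ * ((List.ofFn fv).take (i:ℕ)).prod)) * (B i u ⊗ₖ B i v)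
        = (L₀ * ((List.ofFn fu).take ((i:ℕ)+1)).prod) ⊗ₖ
          (L₀ * ((List.ofFn fv).take ((i:ℕ)+1)).prod) := by
      rw [← Matrix.mul_kronecker_mul, take_succ_prod fu i, take_succ_prod fv i,
        ← mul_assoc, ← mul_assoc]
    calc ((L₀ * ((List.ofFn fu).take (i:ℕ)).prod) ⊗ₖ (L₀ * ((List.ofFn fv).take (i:ℕ)).prod)) *
          (permMat N * (B i u ⊗ₖ B i v) - (B i u ⊗ₖ B i v) * permMat N) *
          ((((List.ofFn fu).drop ((i:ℕ)+1)).prod) ⊗ₖ (((List.ofFn fv).drop ((i:ℕ)+1)).prod))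
        = ((L₀ * ((List.ofFn fu).take (i:ℕ)).prod) ⊗ₖ (L₀ * ((List.ofFn fv).take (i:ℕ)).prod)) *
            permMat N *
            ((B i u ⊗ₖ B i v) *
              ((((List.ofFn fu).drop ((i:ℕ)+1)).prod) ⊗ₖ (((List.ofFn fv).drop ((i:ℕ)+1)).prod)))
          - (((L₀ * ((List.ofFn fu).take (i:ℕ)).prod) ⊗ₖ (L₀ * ((List.ofFn fv).take (i:ℕ)).prod)) *
              (B i u ⊗ₖ B i v)) * permMat N *
            ((((List.ofFn fu).drop ((i:ℕ)+1)).prod) ⊗ₖ (((List.ofFn fv).drop ((i:ℕ)+1)).prod)) := by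
          noncomm_ring
      _ = g (i : ℕ) - g ((i : ℕ) + 1) := by rw [e1, e2, hg]
  rw [Finset.sum_congr rfl (fun i _ => hstep i)]
  rw [← Finset.smul_sum]
  have htel : ∑ i : Fin d, (g (i : ℕ) - g ((i : ℕ) + 1)) = g 0 - g d := by
    rw [Fin.sum_univ_eq_sum_range (fun k => g k - g (k + 1)) d, Finset.sum_range_sub' g d]
  rw [htel]
  have hg0 : g 0 = permMat N * ((L u) ⊗ₖ (L v)) := by
    rw [hg]
    simp only [List.take_zero, List.prod_nil, mul_one, List.drop_zero]
    rw [← permMat_mul_kron L₀ L₀, mul_assoc, ← Matrix.mul_kronecker_mul, ← hL u, ← hL v]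
  have hgd : g d = ((L u) ⊗ₖ (L v)) * permMat N := by
    have hdu : (List.ofFn fu).drop d = [] := by
      apply List.drop_eq_nil_of_le; simp
    have hdv : (List.ofFn fv).drop d = [] := by
      apply List.drop_eq_nil_of_le; simp
    have htu : (List.ofFn fu).take d = List.ofFn fu := by
      apply List.take_of_length_le; simp
    have htv : (List.ofFn fv).take d = List.ofFn fv := by
      apply List.take_of_length_le; simp
    simp only [hg, hdu, hdv, htu, htv, List.prod_nil, Matrix.one_kronecker_one, mul_one]
    rw [← hL u, ← hL v]
  rw [hg0, hgd]

end
end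

section
/- Let τ ∈ ℂ with Im τ > 0, let z_m, Δ ∈ ℂ, and s^0, s^1, s^2, s^3 ∈ ℂ. Define the elliptic chain factor B(z) = s^0 I₂ φ(Δ, z−z_m) + (s^1/(πi)) σ_1 e^{πi(z−z_m)} φ(τ/2 + Δ, z−z_m) + (s^2/(πi)) σ_2 e^{πi(z−z_m)} φ((1+τ)/2 + Δ, z−z_m) + (s^3/(πi)) σ_3 φ(1/2 + Δ, z−z_m). Then for every z ∈ ℂ such that all the theta factors θ11(Δ|τ), θ11(τ/2+Δ|τ), θ11((1+τ)/2+Δ|τ), θ11(1/2+Δ|τ) and θ11(z−z_m|τ), θ11(z+1−z_m|τ), θ11(z+τ−z_m|τ) are nonzero: B(z+1) = σ_3 B(z) σ_3 and B(z+τ) = e^{−2πiΔ} σ_1 B(z) σ_1. -/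
open Complex Matrix

noncomputable section

/-- The Jacobi theta function `θ11(z|τ)`. -/
def θ11 (τ z : ℂ) : ℂ :=
  ∑' n : ℤ, Complex.exp ((Real.pi : ℂ) * I * ((n : ℂ) + 1/2) ^ 2 * τ +
    2 * (Real.pi : ℂ) * I * ((n : ℂ) + 1/2) * (z + 1/2))

/-- `θ'11`, the `z`-derivative of `θ11(z|τ)` at `z = 0`. -/
def θ11' (τ : ℂ) : ℂ := deriv (θ11 τ) 0

/-- `φ(w,z) = θ11(w+z|τ) θ'11 / (θ11(w|τ) θ11(z|τ))`. -/
def phi (τ w z : ℂ) : ℂ := θ11 τ (w + z) * θ11' τ / (θ11 τ w * θ11 τ z)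

/-- Pauli matrix σ₁. -/
def σ1 : Matrix (Fin 2) (Fin 2) ℂ := !![0, 1; 1, 0]
/-- Pauli matrix σ₂. -/
def σ2 : Matrix (Fin 2) (Fin 2) ℂ := !![0, -I; I, 0]
/-- Pauli matrix σ₃. -/
def σ3 : Matrix (Fin 2) (Fin 2) ℂ := !![1, 0; 0, -1]

/-- The elliptic chain factor `B(z)` with pole at `z_m` and shift `Δ`. -/
def chainFactor (τ zm Δ s0 s1 s2 s3 z : ℂ) : Matrix (Fin 2) (Fin 2) ℂ :=
  (s0 * phi τ Δ (z - zm)) • (1 : Matrix (Fin 2) (Fin 2) ℂ) +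
  (s1 / ((Real.pi : ℂ) * I) * Complex.exp ((Real.pi : ℂ) * I * (z - zm)) *
     phi τ (τ / 2 + Δ) (z - zm)) • σ1 +
  (s2 / ((Real.pi : ℂ) * I) * Complex.exp ((Real.pi : ℂ) * I * (z - zm)) *
     phi τ ((1 + τ) / 2 + Δ) (z - zm)) • σ2 +
  (s3 / ((Real.pi : ℂ) * I) * phi τ (1 / 2 + Δ) (z - zm)) • σ3

lemma theta_add_one (τ z : ℂ) : θ11 τ (z + 1) = -θ11 τ z := by
  unfold θ11
  rw [← tsum_neg]
  refine tsum_congr fun n => ?_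
  rw [show (Real.pi : ℂ) * I * ((n : ℂ) + 1/2) ^ 2 * τ +
      2 * (Real.pi : ℂ) * I * ((n : ℂ) + 1/2) * (z + 1 + 1/2)
      = ((Real.pi : ℂ) * I * ((n : ℂ) + 1/2) ^ 2 * τ +
      2 * (Real.pi : ℂ) * I * ((n : ℂ) + 1/2) * (z + 1/2)) + (n : ℂ) * (2 * Real.pi * I)
      + Real.pi * I from by ring,
    Complex.exp_add, Complex.exp_add, Complex.exp_int_mul_two_pi_mul_I, Complex.exp_pi_mul_I]
  ring

lemma theta_add_tau (τ z : ℂ) :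
    θ11 τ (z + τ) = -Complex.exp (-((Real.pi : ℂ) * I * τ) - 2 * Real.pi * I * z) * θ11 τ z := by
  unfold θ11
  have key : ∀ n : ℤ,
      Complex.exp ((Real.pi : ℂ) * I * ((n : ℂ) + 1/2) ^ 2 * τ +
        2 * (Real.pi : ℂ) * I * ((n : ℂ) + 1/2) * (z + τ + 1/2))
      = -Complex.exp (-((Real.pi : ℂ) * I * τ) - 2 * Real.pi * I * z) *
        Complex.exp ((Real.pi : ℂ) * I * (((n + 1 : ℤ) : ℂ) + 1/2) ^ 2 * τ +
          2 * (Real.pi : ℂ) * I * (((n + 1 : ℤ) : ℂ) + 1/2) * (z + 1/2)) := by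
    intro n
    push_cast
    rw [show (Real.pi : ℂ) * I * ((n : ℂ) + 1/2) ^ 2 * τ +
        2 * (Real.pi : ℂ) * I * ((n : ℂ) + 1/2) * (z + τ + 1/2)
        = (-((Real.pi : ℂ) * I * τ) - 2 * Real.pi * I * z) +
          ((Real.pi : ℂ) * I * (((n : ℂ) + 1) + 1/2) ^ 2 * τ +
            2 * (Real.pi : ℂ) * I * (((n : ℂ) + 1) + 1/2) * (z + 1/2)) - Real.pi * I from by ring,
      Complex.exp_sub, Complex.exp_add, Complex.exp_pi_mul_I, div_neg, div_one]
    ring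
  calc (∑' n : ℤ, Complex.exp ((Real.pi : ℂ) * I * ((n : ℂ) + 1/2) ^ 2 * τ +
        2 * (Real.pi : ℂ) * I * ((n : ℂ) + 1/2) * (z + τ + 1/2)))
      = ∑' n : ℤ, -Complex.exp (-((Real.pi : ℂ) * I * τ) - 2 * Real.pi * I * z) *
        Complex.exp ((Real.pi : ℂ) * I * (((n + 1 : ℤ) : ℂ) + 1/2) ^ 2 * τ +
          2 * (Real.pi : ℂ) * I * (((n + 1 : ℤ) : ℂ) + 1/2) * (z + 1/2)) := tsum_congr key
    _ = -Complex.exp (-((Real.pi : ℂ) * I * τ) - 2 * Real.pi * I * z) *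
        ∑' n : ℤ, Complex.exp ((Real.pi : ℂ) * I * (((n + 1 : ℤ) : ℂ) + 1/2) ^ 2 * τ +
          2 * (Real.pi : ℂ) * I * (((n + 1 : ℤ) : ℂ) + 1/2) * (z + 1/2)) := tsum_mul_left
    _ = _ := by
        congr 1
        exact (Equiv.addRight (1 : ℤ)).tsum_eq fun m : ℤ =>
          Complex.exp ((Real.pi : ℂ) * I * ((m : ℂ) + 1/2) ^ 2 * τ +
            2 * (Real.pi : ℂ) * I * ((m : ℂ) + 1/2) * (z + 1/2))

lemma phi_add_one (τ w z : ℂ) : phi τ w (z + 1) = phi τ w z := by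
  unfold phi
  rw [show w + (z + 1) = (w + z) + 1 from by ring, theta_add_one, theta_add_one]
  rw [neg_mul, mul_neg, neg_div_neg_eq]

lemma phi_add_tau (τ w z : ℂ) :
    phi τ w (z + τ) = Complex.exp (-(2 * (Real.pi : ℂ) * I * w)) * phi τ w z := by
  unfold phi
  rw [show w + (z + τ) = (w + z) + τ from by ring, theta_add_tau, theta_add_tau]
  have hA : -Complex.exp (-((Real.pi : ℂ) * I * τ) - 2 * Real.pi * I * z) ≠ 0 :=
    neg_ne_zero.mpr (Complex.exp_ne_zero _)
  have hfac : -Complex.exp (-((Real.pi : ℂ) * I * τ) - 2 * Real.pi * I * (w + z))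
      = Complex.exp (-(2 * (Real.pi : ℂ) * I * w)) *
        -Complex.exp (-((Real.pi : ℂ) * I * τ) - 2 * Real.pi * I * z) := by
    rw [mul_neg, ← Complex.exp_add]
    congr 2
    ring
  rw [hfac]
  rw [show Complex.exp (-(2 * (Real.pi : ℂ) * I * w)) *
      -Complex.exp (-((Real.pi : ℂ) * I * τ) - 2 * Real.pi * I * z) * θ11 τ (w + z) * θ11' τ
      = -Complex.exp (-((Real.pi : ℂ) * I * τ) - 2 * Real.pi * I * z) *
        (Complex.exp (-(2 * (Real.pi : ℂ) * I * w)) * (θ11 τ (w + z) * θ11' τ)) from by ring,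
    show θ11 τ w * (-Complex.exp (-((Real.pi : ℂ) * I * τ) - 2 * Real.pi * I * z) * θ11 τ z)
      = -Complex.exp (-((Real.pi : ℂ) * I * τ) - 2 * Real.pi * I * z) * (θ11 τ w * θ11 τ z) from by
        ring,
    mul_div_mul_left _ _ hA, mul_div_assoc]

lemma combo (a b c d : ℂ) :
    a • (1 : Matrix (Fin 2) (Fin 2) ℂ) + b • σ1 + c • σ2 + d • σ3
      = !![a + d, b - I * c; b + I * c, a - d] := by
  ext i j
  fin_cases i <;> fin_cases j <;> simp [σ1, σ2, σ3] <;> ring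

lemma conj3' (p q r s : ℂ) : σ3 * !![p, q; r, s] * σ3 = !![p, -q; -r, s] := by
  ext i j
  fin_cases i <;> fin_cases j <;>
    simp [σ3, Matrix.mul_apply, Fin.sum_univ_two]

lemma conj1' (p q r s : ℂ) : σ1 * !![p, q; r, s] * σ1 = !![s, r; q, p] := by
  ext i j
  fin_cases i <;> fin_cases j <;>
    simp [σ1, Matrix.mul_apply, Fin.sum_univ_two]

/-- monodromy properties of the elliptic chain factor:
`B(z+1) = σ₃ B(z) σ₃` and `B(z+τ) = e^{−2πiΔ} σ₁ B(z) σ₁`. -/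
theorem statement9 (τ : ℂ) (hτ : 0 < τ.im) (zm Δ s0 s1 s2 s3 : ℂ) (z : ℂ)
    (hΔ0 : θ11 τ Δ ≠ 0) (hΔ1 : θ11 τ (τ / 2 + Δ) ≠ 0)
    (hΔ2 : θ11 τ ((1 + τ) / 2 + Δ) ≠ 0) (hΔ3 : θ11 τ (1 / 2 + Δ) ≠ 0)
    (h1 : θ11 τ (z - zm) ≠ 0) (h2 : θ11 τ (z + 1 - zm) ≠ 0)
    (h3 : θ11 τ (z + τ - zm) ≠ 0) :
    chainFactor τ zm Δ s0 s1 s2 s3 (z + 1) = σ3 * chainFactor τ zm Δ s0 s1 s2 s3 z * σ3 ∧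
    chainFactor τ zm Δ s0 s1 s2 s3 (z + τ) =
      Complex.exp (-2 * (Real.pi : ℂ) * I * Δ) •
        (σ1 * chainFactor τ zm Δ s0 s1 s2 s3 z * σ1) := by
  constructor
  · unfold chainFactor
    rw [show z + 1 - zm = (z - zm) + 1 from by ring, phi_add_one, phi_add_one, phi_add_one,
      phi_add_one,
      show (Real.pi : ℂ) * I * (z - zm + 1) = (Real.pi : ℂ) * I * (z - zm) + Real.pi * I from by
        ring,
      Complex.exp_add, Complex.exp_pi_mul_I]
    rw [combo, combo, conj3']
    ext i j
    fin_cases i <;> fin_cases j <;> simp <;> ring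
  · unfold chainFactor
    rw [show z + τ - zm = (z - zm) + τ from by ring, phi_add_tau, phi_add_tau, phi_add_tau,
      phi_add_tau]
    have hE0 : s0 * (Complex.exp (-(2 * (Real.pi : ℂ) * I * Δ)) * phi τ Δ (z - zm))
        = Complex.exp (-2 * (Real.pi : ℂ) * I * Δ) * (s0 * phi τ Δ (z - zm)) := by
      rw [show -2 * (Real.pi : ℂ) * I * Δ = -(2 * (Real.pi : ℂ) * I * Δ) from by ring]; ring
    have hx1 : Complex.exp ((Real.pi : ℂ) * I * (z - zm + τ)) *
        Complex.exp (-(2 * (Real.pi : ℂ) * I * (τ / 2 + Δ)))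
        = Complex.exp (-2 * (Real.pi : ℂ) * I * Δ) *
          Complex.exp ((Real.pi : ℂ) * I * (z - zm)) := by
      rw [← Complex.exp_add, ← Complex.exp_add]; congr 1; ring
    have hE1 : s1 / ((Real.pi : ℂ) * I) * Complex.exp ((Real.pi : ℂ) * I * (z - zm + τ)) *
        (Complex.exp (-(2 * (Real.pi : ℂ) * I * (τ / 2 + Δ))) * phi τ (τ / 2 + Δ) (z - zm))
        = Complex.exp (-2 * (Real.pi : ℂ) * I * Δ) *
          (s1 / ((Real.pi : ℂ) * I) * Complex.exp ((Real.pi : ℂ) * I * (z - zm)) *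
            phi τ (τ / 2 + Δ) (z - zm)) := by
      linear_combination (s1 / ((Real.pi : ℂ) * I) * phi τ (τ / 2 + Δ) (z - zm)) * hx1
    have hx2 : Complex.exp ((Real.pi : ℂ) * I * (z - zm + τ)) *
        Complex.exp (-(2 * (Real.pi : ℂ) * I * ((1 + τ) / 2 + Δ)))
        = -(Complex.exp (-2 * (Real.pi : ℂ) * I * Δ) *
          Complex.exp ((Real.pi : ℂ) * I * (z - zm))) := by
      rw [← Complex.exp_add, ← Complex.exp_add,
        show (Real.pi : ℂ) * I * (z - zm + τ) + -(2 * (Real.pi : ℂ) * I * ((1 + τ) / 2 + Δ))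
          = (-2 * (Real.pi : ℂ) * I * Δ + (Real.pi : ℂ) * I * (z - zm)) - Real.pi * I from by
            ring,
        Complex.exp_sub, Complex.exp_pi_mul_I, div_neg, div_one]
    have hE2 : s2 / ((Real.pi : ℂ) * I) * Complex.exp ((Real.pi : ℂ) * I * (z - zm + τ)) *
        (Complex.exp (-(2 * (Real.pi : ℂ) * I * ((1 + τ) / 2 + Δ))) *
          phi τ ((1 + τ) / 2 + Δ) (z - zm))
        = Complex.exp (-2 * (Real.pi : ℂ) * I * Δ) *
          -(s2 / ((Real.pi : ℂ) * I) * Complex.exp ((Real.pi : ℂ) * I * (z - zm)) *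
            phi τ ((1 + τ) / 2 + Δ) (z - zm)) := by
      linear_combination (s2 / ((Real.pi : ℂ) * I) * phi τ ((1 + τ) / 2 + Δ) (z - zm)) * hx2
    have hx3 : Complex.exp (-(2 * (Real.pi : ℂ) * I * (1 / 2 + Δ)))
        = -Complex.exp (-2 * (Real.pi : ℂ) * I * Δ) := by
      rw [show -(2 * (Real.pi : ℂ) * I * (1 / 2 + Δ))
          = -2 * (Real.pi : ℂ) * I * Δ - Real.pi * I from by ring,
        Complex.exp_sub, Complex.exp_pi_mul_I, div_neg, div_one]
    have hE3 : s3 / ((Real.pi : ℂ) * I) *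
        (Complex.exp (-(2 * (Real.pi : ℂ) * I * (1 / 2 + Δ))) * phi τ (1 / 2 + Δ) (z - zm))
        = Complex.exp (-2 * (Real.pi : ℂ) * I * Δ) *
          -(s3 / ((Real.pi : ℂ) * I) * phi τ (1 / 2 + Δ) (z - zm)) := by
      rw [hx3]; ring
    rw [hE0, hE1, hE2, hE3, combo, combo, conj1']
    ext i j
    fin_cases i <;> fin_cases j <;> simp <;> ring


end
end
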